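/- Let n ≥ 2, let F : ℝ₊ → ℝ₊ be twice differentiable with F' ≠ 0, let α₁,…,αₙ be nonzero constants, and define f(x₁,…,xₙ) = F(x₁^{α₁}·…·xₙ^{αₙ}) on ℝ₊ⁿ. Then for every x ∈ ℝ₊ⁿ at which the denominator in the definition of H_{ij} is nonzero and all 1 ≤ i ≠ j ≤ n, the Hicks elasticity of substitution satisfies H_{ij}(x) = 1; i.e. the homothetic generalized Cobb–Douglas production function has constant Hicks elasticity of substitution equal to 1. -/

import Mathlib

open Real Finset

/-- The partial derivative of `f : ℝⁿ → ℝ` in the `i`-th coordinate direction. -/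
noncomputable def pderiv' {n : ℕ} (f : (Fin n → ℝ) → ℝ) (i : Fin n) (x : Fin n → ℝ) : ℝ :=
  deriv (fun t => f (Function.update x i t)) (x i)

/-- The denominator in the definition of the Hicks elasticity of substitution. -/
noncomputable def hicksDenom {n : ℕ} (f : (Fin n → ℝ) → ℝ) (i j : Fin n)
    (x : Fin n → ℝ) : ℝ :=
  pderiv' (pderiv' f i) i x / (pderiv' f i x) ^ 2
    - 2 * pderiv' (pderiv' f j) i x / (pderiv' f i x * pderiv' f j x)
    + pderiv' (pderiv' f j) j x / (pderiv' f j x) ^ 2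

/-- The Hicks elasticity of substitution of the `i`-th production variable
with respect to the `j`-th one. -/
noncomputable def hicks {n : ℕ} (f : (Fin n → ℝ) → ℝ) (i j : Fin n)
    (x : Fin n → ℝ) : ℝ :=
  -(1 / (x i * pderiv' f i x) + 1 / (x j * pderiv' f j x)) / hicksDenom f i j x

private lemma prod_update' {n : ℕ} (α : Fin n → ℝ) (x : Fin n → ℝ) (i : Fin n) (t : ℝ) :
    (∏ k, (Function.update x i t k) ^ (α k)) =
      t ^ (α i) * ∏ k ∈ Finset.univ.erase i, (x k) ^ (α k) := by
  rw [← Finset.mul_prod_erase Finset.univ (fun k => (Function.update x i t k) ^ (α k))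
    (Finset.mem_univ i)]
  simp only [Function.update_self]
  congr 1
  refine Finset.prod_congr rfl fun k hk => ?_
  rw [Function.update_of_ne (Finset.ne_of_mem_erase hk)]

private lemma pderiv_f {n : ℕ} (F : ℝ → ℝ)
    (hF1 : ∀ u > (0:ℝ), DifferentiableAt ℝ F u)
    (α : Fin n → ℝ)
    (f : (Fin n → ℝ) → ℝ)
    (hf : ∀ x : Fin n → ℝ, (∀ i, 0 < x i) → f x = F (∏ i, (x i) ^ (α i)))
    (y : Fin n → ℝ) (hy : ∀ i, 0 < y i) (i : Fin n) :
    pderiv' f i y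
      = deriv F (∏ k, (y k) ^ (α k)) * (α i * (∏ k, (y k) ^ (α k)) / y i) := by
  set c := ∏ k ∈ Finset.univ.erase i, (y k) ^ (α k) with hc_def
  set u := ∏ k, (y k) ^ (α k) with hu_def
  have hc : 0 < c := Finset.prod_pos fun k _ => Real.rpow_pos_of_pos (hy k) _
  have hu : u = (y i) ^ (α i) * c := by
    have := prod_update' α y i (y i)
    simpa [Function.update_eq_self, ← hu_def, ← hc_def] using this
  have hupos : 0 < u := hu ▸ mul_pos (Real.rpow_pos_of_pos (hy i) _) hc
  have hφ : HasDerivAt (fun t : ℝ => t ^ (α i) * c) (α i * u / y i) (y i) := by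
    have h := (Real.hasDerivAt_rpow_const (p := α i) (Or.inl (hy i).ne')).mul_const c
    refine h.congr_deriv ?_
    rw [Real.rpow_sub (hy i), Real.rpow_one, hu]
    field_simp
  have hF : HasDerivAt F (deriv F u) ((y i) ^ (α i) * c) := by
    rw [← hu]; exact (hF1 u hupos).hasDerivAt
  have hcomp : HasDerivAt (fun t : ℝ => F (t ^ (α i) * c))
      (deriv F u * (α i * u / y i)) (y i) := by
    have := HasDerivAt.comp (y i) hF hφ
    exact this
  have hev : (fun t => f (Function.update y i t)) =ᶠ[nhds (y i)]
      (fun t : ℝ => F (t ^ (α i) * c)) := by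
    filter_upwards [eventually_gt_nhds (hy i)] with t ht
    have hpos : ∀ k, 0 < Function.update y i t k := by
      intro k
      rcases eq_or_ne k i with rfl | hk
      · simpa using ht
      · simpa [Function.update_of_ne hk] using hy k
    rw [hf _ hpos, prod_update']
  have hcomp' := hcomp.congr_of_eventuallyEq hev
  rw [pderiv', hcomp'.deriv]

private lemma pderiv2_same {n : ℕ} (F : ℝ → ℝ)
    (hF1 : ∀ u > (0:ℝ), DifferentiableAt ℝ F u)
    (hF2 : ∀ u > (0:ℝ), DifferentiableAt ℝ (deriv F) u)
    (α : Fin n → ℝ)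
    (f : (Fin n → ℝ) → ℝ)
    (hf : ∀ x : Fin n → ℝ, (∀ i, 0 < x i) → f x = F (∏ i, (x i) ^ (α i)))
    (x : Fin n → ℝ) (hx : ∀ i, 0 < x i) (i : Fin n) :
    pderiv' (pderiv' f i) i x
      = deriv (deriv F) (∏ k, (x k) ^ (α k)) * (α i * (∏ k, (x k) ^ (α k)) / x i) ^ 2
        + deriv F (∏ k, (x k) ^ (α k))
          * (α i * (α i - 1) * (∏ k, (x k) ^ (α k)) / (x i) ^ 2) := by
  set c := ∏ k ∈ Finset.univ.erase i, (x k) ^ (α k) with hc_def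
  set u := ∏ k, (x k) ^ (α k) with hu_def
  have hc : 0 < c := Finset.prod_pos fun k _ => Real.rpow_pos_of_pos (hx k) _
  have hu : u = (x i) ^ (α i) * c := by
    have := prod_update' α x i (x i)
    simpa [Function.update_eq_self, ← hu_def, ← hc_def] using this
  have hupos : 0 < u := hu ▸ mul_pos (Real.rpow_pos_of_pos (hx i) _) hc
  have hv : (x i) ^ (α i) * c = u := hu.symm
  have hφ : HasDerivAt (fun t : ℝ => t ^ (α i) * c) (α i * u / x i) (x i) := by
    have h := (Real.hasDerivAt_rpow_const (p := α i) (Or.inl (hx i).ne')).mul_const c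
    refine h.congr_deriv ?_
    rw [Real.rpow_sub (hx i), Real.rpow_one, hu]
    field_simp
  have hF2' : HasDerivAt (deriv F) (deriv (deriv F) u) ((x i) ^ (α i) * c) := by
    rw [hv]; exact (hF2 u hupos).hasDerivAt
  have hF'c : HasDerivAt (fun t : ℝ => deriv F (t ^ (α i) * c))
      (deriv (deriv F) u * (α i * u / x i)) (x i) := by
    have := HasDerivAt.comp (x i) hF2' hφ
    exact this
  have hlin : HasDerivAt (fun t : ℝ => α i * (t ^ (α i) * c) / t)
      ((α i * (α i * u / x i) * x i - α i * ((x i) ^ (α i) * c) * 1) / (x i) ^ 2)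
      (x i) :=
    (hφ.const_mul (α i)).div (hasDerivAt_id (x i)) (hx i).ne'
  have hmul := hF'c.mul hlin
  have hev : (fun t => pderiv' f i (Function.update x i t)) =ᶠ[nhds (x i)]
      (fun t : ℝ => deriv F (t ^ (α i) * c) * (α i * (t ^ (α i) * c) / t)) := by
    filter_upwards [eventually_gt_nhds (hx i)] with t ht
    have hpos : ∀ k, 0 < Function.update x i t k := by
      intro k
      rcases eq_or_ne k i with rfl | hk
      · simpa using ht
      · simpa [Function.update_of_ne hk] using hx k
    rw [pderiv_f F hF1 α f hf _ hpos i, prod_update', Function.update_self, ← hc_def]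
  have hfinal := hmul.congr_of_eventuallyEq hev
  rw [pderiv', hfinal.deriv, hv]
  have hxne := (hx i).ne'
  field_simp

private lemma pderiv2_mixed {n : ℕ} (F : ℝ → ℝ)
    (hF1 : ∀ u > (0:ℝ), DifferentiableAt ℝ F u)
    (hF2 : ∀ u > (0:ℝ), DifferentiableAt ℝ (deriv F) u)
    (α : Fin n → ℝ)
    (f : (Fin n → ℝ) → ℝ)
    (hf : ∀ x : Fin n → ℝ, (∀ i, 0 < x i) → f x = F (∏ i, (x i) ^ (α i)))
    (x : Fin n → ℝ) (hx : ∀ i, 0 < x i) (i j : Fin n) (hij : i ≠ j) :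
    pderiv' (pderiv' f j) i x
      = deriv (deriv F) (∏ k, (x k) ^ (α k)) * (α i * (∏ k, (x k) ^ (α k)) / x i)
          * (α j * (∏ k, (x k) ^ (α k)) / x j)
        + deriv F (∏ k, (x k) ^ (α k))
          * (α i * α j * (∏ k, (x k) ^ (α k)) / (x i * x j)) := by
  set c := ∏ k ∈ Finset.univ.erase i, (x k) ^ (α k) with hc_def
  set u := ∏ k, (x k) ^ (α k) with hu_def
  have hc : 0 < c := Finset.prod_pos fun k _ => Real.rpow_pos_of_pos (hx k) _
  have hu : u = (x i) ^ (α i) * c := by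
    have := prod_update' α x i (x i)
    simpa [Function.update_eq_self, ← hu_def, ← hc_def] using this
  have hupos : 0 < u := hu ▸ mul_pos (Real.rpow_pos_of_pos (hx i) _) hc
  have hv : (x i) ^ (α i) * c = u := hu.symm
  have hφ : HasDerivAt (fun t : ℝ => t ^ (α i) * c) (α i * u / x i) (x i) := by
    have h := (Real.hasDerivAt_rpow_const (p := α i) (Or.inl (hx i).ne')).mul_const c
    refine h.congr_deriv ?_
    rw [Real.rpow_sub (hx i), Real.rpow_one, hu]
    field_simp
  have hF2' : HasDerivAt (deriv F) (deriv (deriv F) u) ((x i) ^ (α i) * c) := by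
    rw [hv]; exact (hF2 u hupos).hasDerivAt
  have hF'c : HasDerivAt (fun t : ℝ => deriv F (t ^ (α i) * c))
      (deriv (deriv F) u * (α i * u / x i)) (x i) := by
    have := HasDerivAt.comp (x i) hF2' hφ
    exact this
  have hlin : HasDerivAt (fun t : ℝ => α j * (t ^ (α i) * c) / x j)
      (α j * (α i * u / x i) / x j) (x i) :=
    (hφ.const_mul (α j)).div_const (x j)
  have hmul := hF'c.mul hlin
  have hev : (fun t => pderiv' f j (Function.update x i t)) =ᶠ[nhds (x i)]
      (fun t : ℝ => deriv F (t ^ (α i) * c) * (α j * (t ^ (α i) * c) / x j)) := by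
    filter_upwards [eventually_gt_nhds (hx i)] with t ht
    have hpos : ∀ k, 0 < Function.update x i t k := by
      intro k
      rcases eq_or_ne k i with rfl | hk
      · simpa using ht
      · simpa [Function.update_of_ne hk] using hx k
    rw [pderiv_f F hF1 α f hf _ hpos j, prod_update',
      Function.update_of_ne hij.symm, ← hc_def]
  have hfinal := hmul.congr_of_eventuallyEq hev
  rw [pderiv', hfinal.deriv, hv]
  have hxne := (hx i).ne'
  have hxjne := (hx j).ne'
  field_simp
  all_goals try ring
  all_goals tauto

theorem stmt_18 (n : ℕ) (hn : 2 ≤ n) (F : ℝ → ℝ)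
    (hFpos : ∀ u > (0 : ℝ), 0 < F u)
    (hF1 : ∀ u > (0 : ℝ), DifferentiableAt ℝ F u)
    (hF2 : ∀ u > (0 : ℝ), DifferentiableAt ℝ (deriv F) u)
    (hF' : ∀ u > (0 : ℝ), deriv F u ≠ 0)
    (α : Fin n → ℝ) (hα : ∀ i, α i ≠ 0)
    (f : (Fin n → ℝ) → ℝ)
    (hf : ∀ x : Fin n → ℝ, (∀ i, 0 < x i) → f x = F (∏ i, (x i) ^ (α i))) :
    ∀ x : Fin n → ℝ, (∀ i, 0 < x i) → ∀ i j : Fin n, i ≠ j →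
      hicksDenom f i j x ≠ 0 → hicks f i j x = 1 := by
  intro x hx i j hij hD
  set u := ∏ k, (x k) ^ (α k) with hu_def
  have hupos : 0 < u :=
    Finset.prod_pos fun k _ => Real.rpow_pos_of_pos (hx k) _
  have hA : deriv F u ≠ 0 := hF' u hupos
  have hfi := pderiv_f F hF1 α f hf x hx i
  have hfj := pderiv_f F hF1 α f hf x hx j
  have hfii := pderiv2_same F hF1 hF2 α f hf x hx i
  have hfjj := pderiv2_same F hF1 hF2 α f hf x hx j
  have hfij := pderiv2_mixed F hF1 hF2 α f hf x hx i j hij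
  have hnum : -(1 / (x i * pderiv' f i x) + 1 / (x j * pderiv' f j x))
      = hicksDenom f i j x := by
    rw [hicksDenom, hfi, hfj, hfii, hfjj, hfij]
    have h1 := (hx i).ne'
    have h2 := (hx j).ne'
    have h3 := hα i
    have h4 := hα j
    have h5 := hupos.ne'
    rw [← hu_def]
    field_simp
    ring
  rw [hicks, hnum, div_self hD]
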